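/- The function σ ↦ σ log²(1 + γ + 1/σ) is increasing on (0, 1] for every γ ≥ 1. -/

import Mathlib

open Real Set

lemma log_ge_two_sub (u : ℝ) (hu : 3 ≤ u) : 2 - Real.exp 1 / u ≤ Real.log u := by
  have hupos : (0:ℝ) < u := by linarith
  have he : (0:ℝ) < Real.exp 1 := Real.exp_pos 1
  have ht : (0:ℝ) < Real.exp 1 / u := by positivity
  have h1 : Real.log (Real.exp 1 / u) ≤ Real.exp 1 / u - 1 :=
    Real.log_le_sub_one_of_pos ht
  have h2 : Real.log (Real.exp 1 / u) = 1 - Real.log u := by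
    rw [Real.log_div (Real.exp_ne_zero 1) hupos.ne', Real.log_exp]
  linarith

/-- `σ ↦ σ log²(1+γ+1/σ)` is increasing on `(0,1]` for every `γ ≥ 1`. -/
theorem strictMonoOn_mul_sq_log (γ : ℝ) (hγ : 1 ≤ γ) :
    StrictMonoOn (fun σ : ℝ => σ * (Real.log (1 + γ + 1 / σ)) ^ 2) (Set.Ioc 0 1) := by
  have hconv : Convex ℝ (Set.Ioc (0:ℝ) 1) := convex_Ioc 0 1
  have harg : ∀ x ∈ Set.Ioc (0:ℝ) 1, 3 ≤ 1 + γ + 1 / x := by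
    intro x hx
    have hx0 : (0:ℝ) < x := hx.1
    have : (1:ℝ) ≤ 1 / x := (le_div_iff₀ hx0).mpr (by linarith [hx.2])
    linarith
  apply strictMonoOn_of_deriv_pos hconv
  · apply ContinuousOn.mul continuousOn_id
    apply ContinuousOn.pow
    apply ContinuousOn.log
    · exact continuousOn_const.add (continuousOn_const.div continuousOn_id
        (fun x hx => ne_of_gt hx.1))
    · intro x hx
      have := harg x hx
      linarith
  · intro x hx
    rw [interior_Ioc] at hx
    have hx0 : (0:ℝ) < x := hx.1
    have hx1 : x ≤ 1 := le_of_lt hx.2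
    set u : ℝ := 1 + γ + 1 / x with hu
    have hu3 : 3 ≤ u := harg x ⟨hx0, hx1⟩
    have hu0 : (0:ℝ) < u := by linarith
    -- derivative computation
    have h1 : HasDerivAt (fun σ : ℝ => 1 + γ + 1 / σ) (-1 / x ^ 2) x := by
      have := ((hasDerivAt_inv hx0.ne').const_add (1 + γ))
      simpa [one_div, neg_div] using this
    have h2 : HasDerivAt (fun σ : ℝ => Real.log (1 + γ + 1 / σ)) ((-1 / x ^ 2) / u) x :=
      h1.log hu0.ne'
    have h3 := h2.pow 2
    have h4 : HasDerivAt (fun σ : ℝ => σ * (Real.log (1 + γ + 1 / σ)) ^ 2)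
        (1 * Real.log (1 + γ + 1 / x) ^ 2 +
          x * ((2:ℕ) * Real.log (1 + γ + 1 / x) ^ (2 - 1) * (-1 / x ^ 2 / u))) x :=
      (hasDerivAt_id x).mul h3
    rw [h4.deriv, ← hu]
    -- positivity
    set L : ℝ := Real.log u with hL
    have hbd : 2 - Real.exp 1 / u ≤ L := log_ge_two_sub u hu3
    have he : Real.exp 1 < 2.7182818286 := Real.exp_one_lt_d9
    have he0 : (0:ℝ) < Real.exp 1 := Real.exp_pos 1
    have hxu : x * u = x * (1 + γ) + 1 := by
      field_simp [hu]
      rw [hu, mul_add, mul_one_div_cancel hx0.ne']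
    have hxu0 : (0:ℝ) < x * u := by positivity
    have hkey : 2 < x * u * L := by
      have h5 : x * u * (2 - Real.exp 1 / u) = 2 * (x * u) - x * Real.exp 1 := by
        field_simp
      have hA : x * u * (2 - Real.exp 1 / u) ≤ x * u * L :=
        mul_le_mul_of_nonneg_left hbd hxu0.le
      rw [h5] at hA
      nlinarith [hA, mul_pos hx0 (show (0:ℝ) < 2 + 2 * γ - Real.exp 1 by linarith)]
    have hLpos : 0 < L := by
      have : Real.exp 1 / u ≤ Real.exp 1 / 3 :=
        div_le_div_of_nonneg_left he0.le (by norm_num) hu3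
      nlinarith
    have hexpand : 1 * L ^ 2 + x * (((2:ℕ):ℝ) * L ^ (2 - 1) * (-1 / x ^ 2 / u)) =
        L * (L - 2 / (x * u)) := by
      push_cast
      field_simp
      ring
    rw [hexpand]
    have : 2 / (x * u) < L := (div_lt_iff₀ hxu0).mpr (by linarith [hkey])
    nlinarith
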